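/- The Hartogs triangle Ω := {(z,w) ∈ ℂ² : |z| < |w| < 1} is not P-hyperconvex. -/

import Mathlib

open MeasureTheory Metric Set Filter

noncomputable section

/-- The positive part of an extended real number, as an element of `ℝ≥0∞`. -/
def erealPos (x : EReal) : ENNReal := if x = ⊤ then ⊤ else ENNReal.ofReal x.toReal

/-- The integral of an extended-real-valued function `u` against a measure `μ`,
defined as the difference of the (unsigned) lower integrals of the positive and
negative parts of `u`. -/
def erealIntegral {α : Type*} [MeasurableSpace α] (μ : Measure α) (u : α → EReal) : EReal :=
  ((∫⁻ a, erealPos (u a) ∂μ : ENNReal) : EReal) - ((∫⁻ a, erealPos (-(u a)) ∂μ : ENNReal) : EReal)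

/-- The normalized "angle" measure on `(0, 2π]`, used to express averages over circles. -/
def circleAngleMeasure : Measure ℝ :=
  (ENNReal.ofReal (2 * Real.pi))⁻¹ • volume.restrict (Set.Ioc 0 (2 * Real.pi))

/-- A function `u` with values in `[-∞, ∞)` is plurisubharmonic on an open set
`U ⊆ ℂⁿ` if it is upper semicontinuous on `U`, takes no value `+∞` on `U`, and
satisfies the sub-mean-value inequality on every closed disc of every complex line
contained in `U`. -/
def PshOn {n : ℕ} (u : (Fin n → ℂ) → EReal) (U : Set (Fin n → ℂ)) : Prop :=
  UpperSemicontinuousOn u U ∧ (∀ z ∈ U, u z ≠ ⊤) ∧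
  ∀ (a b : Fin n → ℂ) (r : ℝ), 0 < r →
    (∀ w : ℂ, ‖w‖ ≤ r → a + w • b ∈ U) →
    u a ≤ erealIntegral circleAngleMeasure
      (fun θ : ℝ => u (a + ((r : ℝ) * Complex.exp (θ * Complex.I)) • b))

/-- `u : ℂⁿ → ℝ` belongs to `PSH°(X)` (for `X` compact) if there is an open
neighborhood `U ⊇ X` and a continuous plurisubharmonic function `v` on `U`
with `v = u` on `X`. -/
def PshO {n : ℕ} (u : (Fin n → ℂ) → ℝ) (X : Set (Fin n → ℂ)) : Prop :=
  ∃ U : Set (Fin n → ℂ), IsOpen U ∧ X ⊆ U ∧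
    ∃ v : (Fin n → ℂ) → ℝ, ContinuousOn v U ∧ PshOn (fun z => (v z : EReal)) U ∧
      ∀ z ∈ X, u z = v z

/-- The Jensen measures at `z` with respect to the compact set `X`: Borel probability
measures supported in `X` such that `u z ≤ ∫ u dμ` for all `u ∈ PSH°(X)`. -/
def JensenMeasures {n : ℕ} (X : Set (Fin n → ℂ)) (z : Fin n → ℂ) :
    Set (Measure (Fin n → ℂ)) :=
  {μ | IsProbabilityMeasure μ ∧ μ Xᶜ = 0 ∧
    ∀ u : (Fin n → ℂ) → ℝ, PshO u X → u z ≤ ∫ x, u x ∂μ}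

/-- An upper semicontinuous function `u : X → [-∞, ∞)` is plurisubharmonic on the
compact set `X` if `u z ≤ ∫ u dμ` for every `z ∈ X` and every Jensen measure
`μ ∈ J_z(X)`. -/
def PshCompact {n : ℕ} (u : (Fin n → ℂ) → EReal) (X : Set (Fin n → ℂ)) : Prop :=
  UpperSemicontinuousOn u X ∧ (∀ z ∈ X, u z ≠ ⊤) ∧
  ∀ z ∈ X, ∀ μ ∈ JensenMeasures X z, u z ≤ erealIntegral μ u

/-- A (bounded) domain: a bounded, connected, open subset of `ℂⁿ`. -/
def IsBoundedDomain {n : ℕ} (Ω : Set (Fin n → ℂ)) : Prop :=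
  IsOpen Ω ∧ IsConnected Ω ∧ Bornology.IsBounded Ω

/-- The defining property of P-hyperconvexity: a non-constant function
`φ ∈ PSH(Ω̄) ∩ C(Ω̄)` vanishing on `∂Ω`. -/
def PHxExhaustion {n : ℕ} (Ω : Set (Fin n → ℂ)) : Prop :=
  ∃ φ : (Fin n → ℂ) → ℝ,
    PshCompact (fun z => (φ z : EReal)) (closure Ω) ∧ ContinuousOn φ (closure Ω) ∧
    (∃ z ∈ closure Ω, ∃ w ∈ closure Ω, φ z ≠ φ w) ∧
    ∀ z ∈ frontier Ω, φ z = 0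

/-- A bounded domain `Ω ⊂ ℂⁿ` is P-hyperconvex if there is a non-constant
`φ ∈ PSH(Ω̄) ∩ C(Ω̄)` with `φ = 0` on `∂Ω`. -/
def IsPHyperconvex {n : ℕ} (Ω : Set (Fin n → ℂ)) : Prop :=
  IsBoundedDomain Ω ∧ PHxExhaustion Ω

/-- A bounded domain `Ω ⊂ ℂⁿ` is hyperconvex if there is a non-constant
`φ ∈ PSH(Ω) ∩ C(Ω̄)` with `φ = 0` on `∂Ω`. -/
def IsHyperconvex {n : ℕ} (Ω : Set (Fin n → ℂ)) : Prop :=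
  IsBoundedDomain Ω ∧
  ∃ φ : (Fin n → ℂ) → ℝ,
    PshOn (fun z => (φ z : EReal)) Ω ∧ ContinuousOn φ (closure Ω) ∧
    (∃ z ∈ closure Ω, ∃ w ∈ closure Ω, φ z ≠ φ w) ∧
    ∀ z ∈ frontier Ω, φ z = 0

end

noncomputable section HelperLemmas

open scoped ENNReal NNReal

lemma two_pi_pos : (0:ℝ) < 2 * Real.pi := by positivity

instance : IsProbabilityMeasure circleAngleMeasure := by
  constructor
  simp only [circleAngleMeasure, Measure.smul_apply, Measure.restrict_apply MeasurableSet.univ,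
    Set.univ_inter, Real.volume_Ioc, smul_eq_mul, sub_zero]
  exact ENNReal.inv_mul_cancel (by simp [ENNReal.ofReal_eq_zero, not_le]; positivity) ENNReal.ofReal_ne_top

lemma integrable_circleAngle {h : ℝ → ℝ} (hh : Continuous h) :
    Integrable h circleAngleMeasure := by
  refine Integrable.smul_measure ?_ (by simp; positivity)
  have : IntegrableOn h (Set.Icc 0 (2 * Real.pi)) volume :=
    hh.continuousOn.integrableOn_compact isCompact_Icc
  exact this.mono_set Set.Ioc_subset_Icc_self

lemma erealPos_coe (x : ℝ) : erealPos ((x : ℝ) : EReal) = ENNReal.ofReal x := by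
  simp [erealPos]

lemma erealIntegral_coe {α : Type*} [MeasurableSpace α] {μ : Measure α} {h : α → ℝ}
    (hh : Integrable h μ) :
    erealIntegral μ (fun x => ((h x : ℝ) : EReal)) = ((∫ x, h x ∂μ : ℝ) : EReal) := by
  have hA : (∫⁻ x, ENNReal.ofReal (h x) ∂μ) ≠ ⊤ := by
    refine ne_of_lt (lt_of_le_of_lt (MeasureTheory.lintegral_mono
      fun x => Real.ofReal_le_enorm _) ?_)
    exact hh.2
  have hB : (∫⁻ x, ENNReal.ofReal (-(h x)) ∂μ) ≠ ⊤ := by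
    refine ne_of_lt (lt_of_le_of_lt (MeasureTheory.lintegral_mono fun x => ?_) hh.2)
    calc ENNReal.ofReal (-(h x)) ≤ ‖-(h x)‖ₑ := Real.ofReal_le_enorm _
    _ = ‖h x‖ₑ := by simp
  have hneg : ∀ x : ℝ, erealPos (-((x:ℝ):EReal)) = ENNReal.ofReal (-x) := by
    intro x; rw [← EReal.coe_neg]; exact erealPos_coe _
  rw [MeasureTheory.integral_eq_lintegral_pos_part_sub_lintegral_neg_part hh]
  simp only [erealIntegral, erealPos_coe, hneg]
  lift (∫⁻ x, ENNReal.ofReal (h x) ∂μ) to ℝ≥0 using hA with A hAe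
  lift (∫⁻ x, ENNReal.ofReal (-(h x)) ∂μ) to ℝ≥0 using hB with B hBe
  rw [EReal.coe_nnreal_eq_coe_real, EReal.coe_nnreal_eq_coe_real, ← EReal.coe_sub]
  norm_cast

lemma aemeasurable_of_continuousOn {n : ℕ} {μ : MeasureTheory.Measure (Fin n → ℂ)}
    {X : Set (Fin n → ℂ)} (hX : MeasurableSet X) (hμ : μ Xᶜ = 0)
    {g : (Fin n → ℂ) → ℝ} (hg : ContinuousOn g X) : AEMeasurable g μ := by
  have h1 : AEMeasurable g (μ.restrict X) := hg.aemeasurable hX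
  rwa [Measure.restrict_eq_self_of_ae_mem (MeasureTheory.mem_ae_iff.mpr hμ)] at h1

lemma erealIntegral_map {n : ℕ} {c : ℝ → (Fin n → ℂ)} (hc : Measurable c)
    {g : (Fin n → ℂ) → ℝ} (hg : AEMeasurable g (circleAngleMeasure.map c)) :
    erealIntegral (circleAngleMeasure.map c) (fun p => ((g p : ℝ) : EReal)) =
      erealIntegral circleAngleMeasure (fun θ => ((g (c θ) : ℝ) : EReal)) := by
  have hneg : ∀ x : ℝ, erealPos (-((x:ℝ):EReal)) = ENNReal.ofReal (-x) := by
    intro x; rw [← EReal.coe_neg]; exact erealPos_coe _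
  simp only [erealIntegral, erealPos_coe, hneg]
  rw [MeasureTheory.lintegral_map' (f := fun p => ENNReal.ofReal (g p)) hg.ennreal_ofReal
      hc.aemeasurable,
    MeasureTheory.lintegral_map' (f := fun p => ENNReal.ofReal (-(g p))) hg.neg.ennreal_ofReal
      hc.aemeasurable]

/-- The circle parametrization used in the sub-mean-value inequality. -/
def cmap {n : ℕ} (z b : Fin n → ℂ) (r : ℝ) (θ : ℝ) : Fin n → ℂ :=
  z + (((r : ℝ) : ℂ) * Complex.exp ((θ : ℂ) * Complex.I)) • b

lemma cmap_continuous {n : ℕ} (z b : Fin n → ℂ) (r : ℝ) : Continuous (cmap z b r) := by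
  unfold cmap
  fun_prop

lemma cmap_mem {n : ℕ} {X : Set (Fin n → ℂ)} {z b : Fin n → ℂ} {r : ℝ} (hr : 0 < r)
    (hdisc : ∀ w : ℂ, ‖w‖ ≤ r → z + w • b ∈ X) (θ : ℝ) : cmap z b r θ ∈ X := by
  refine hdisc _ ?_
  rw [norm_mul, Complex.norm_exp_ofReal_mul_I, mul_one, Complex.norm_real, Real.norm_eq_abs, abs_of_pos hr]

end HelperLemmas

noncomputable section HelperLemmas2

open scoped ENNReal NNReal

lemma cmap_null {n : ℕ} {X : Set (Fin n → ℂ)} (hX : IsClosed X) {z b : Fin n → ℂ} {r : ℝ}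
    (hr : 0 < r) (hdisc : ∀ w : ℂ, ‖w‖ ≤ r → z + w • b ∈ X) :
    (circleAngleMeasure.map (cmap z b r)) Xᶜ = 0 := by
  rw [Measure.map_apply (cmap_continuous z b r).measurable hX.measurableSet.compl]
  have : cmap z b r ⁻¹' Xᶜ = ∅ := by
    ext θ; simp [cmap_mem hr hdisc θ]
  simp [this]

lemma jensen_circle {n : ℕ} {X : Set (Fin n → ℂ)} (hX : IsClosed X)
    (z b : Fin n → ℂ) (r : ℝ) (hr : 0 < r)
    (hdisc : ∀ w : ℂ, ‖w‖ ≤ r → z + w • b ∈ X) :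
    circleAngleMeasure.map (cmap z b r) ∈ JensenMeasures X z := by
  have hcc := cmap_continuous z b r
  have hnull := cmap_null hX hr hdisc
  refine ⟨Measure.isProbabilityMeasure_map hcc.measurable.aemeasurable, hnull, ?_⟩
  intro u hu
  obtain ⟨U, hUo, hXU, v, hvc, hvpsh, huv⟩ := hu
  have hzX : z ∈ X := by
    have := hdisc 0 (by simp [hr.le]); simpa using this
  have hvcont : Continuous (fun θ => v (cmap z b r θ)) :=
    hvc.comp_continuous hcc (fun θ => hXU (cmap_mem hr hdisc θ))
  have hint : Integrable (fun θ => v (cmap z b r θ)) circleAngleMeasure :=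
    integrable_circleAngle hvcont
  have h1 : (v z : EReal) ≤ ((∫ θ, v (cmap z b r θ) ∂circleAngleMeasure : ℝ) : EReal) := by
    have h : ((v z : ℝ) : EReal) ≤ erealIntegral circleAngleMeasure
        (fun θ => ((v (cmap z b r θ) : ℝ) : EReal)) :=
      hvpsh.2.2 z b r hr (fun w hw => hXU (hdisc w hw))
    rwa [erealIntegral_coe hint] at h
  have hvmeas : AEStronglyMeasurable v (circleAngleMeasure.map (cmap z b r)) := by
    refine (aemeasurable_of_continuousOn hUo.measurableSet ?_ hvc).aestronglyMeasurable
    exact MeasureTheory.measure_mono_null (Set.compl_subset_compl.mpr hXU) hnull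
  have huev : u =ᵐ[circleAngleMeasure.map (cmap z b r)] v := by
    refine MeasureTheory.measure_mono_null ?_ hnull
    intro x hx
    exact fun hxX => hx (huv x hxX)
  rw [MeasureTheory.integral_congr_ae huev,
    MeasureTheory.integral_map hcc.measurable.aemeasurable hvmeas, huv z hzX]
  exact_mod_cast h1

lemma pshCompact_submean {n : ℕ} {X : Set (Fin n → ℂ)} (hX : IsClosed X)
    {φ : (Fin n → ℂ) → ℝ} (hφ : PshCompact (fun z => (φ z : EReal)) X)
    (hc : ContinuousOn φ X) (z b : Fin n → ℂ) (r : ℝ) (hr : 0 < r)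
    (hdisc : ∀ w : ℂ, ‖w‖ ≤ r → z + w • b ∈ X) :
    φ z ≤ ∫ θ, φ (cmap z b r θ) ∂circleAngleMeasure := by
  have hcc := cmap_continuous z b r
  have hnull := cmap_null hX hr hdisc
  have hzX : z ∈ X := by
    have := hdisc 0 (by simp [hr.le]); simpa using this
  have h := hφ.2.2 z hzX _ (jensen_circle hX z b r hr hdisc)
  have hφc : Continuous (fun θ => φ (cmap z b r θ)) :=
    hc.comp_continuous hcc (fun θ => cmap_mem hr hdisc θ)
  have hg : AEMeasurable φ (circleAngleMeasure.map (cmap z b r)) :=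
    aemeasurable_of_continuousOn hX.measurableSet hnull hc
  rw [erealIntegral_map hcc.measurable hg,
    erealIntegral_coe (integrable_circleAngle hφc)] at h
  have h' : ((φ z : ℝ) : EReal)
      ≤ ((∫ θ, φ (cmap z b r θ) ∂circleAngleMeasure : ℝ) : EReal) := h
  exact_mod_cast h'

lemma touch {f : ℝ → ℝ} (hf : Continuous f) {M : ℝ} (hb : ∀ x, f x ≤ M)
    (havg : M ≤ ∫ θ, f θ ∂circleAngleMeasure) : M ≤ f (2 * Real.pi) := by
  by_contra hlt
  push_neg at hlt
  set ε := M - f (2 * Real.pi) with hε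
  have hε0 : 0 < ε := by simp only [hε]; linarith
  obtain ⟨δ, hδ0, hδ⟩ := Metric.isOpen_iff.mp (isOpen_lt hf continuous_const) (2 * Real.pi)
    (show f (2 * Real.pi) < M - ε / 2 by simp only [hε]; linarith)
  set δ' := min (δ / 2) Real.pi with hδ'
  have hδ'0 : 0 < δ' := lt_min (by linarith) Real.pi_pos
  have hδ'le : δ' ≤ Real.pi := min_le_right _ _
  have hν : ∫ θ, f θ ∂circleAngleMeasure
      = (2 * Real.pi)⁻¹ * ∫ θ in (0:ℝ)..(2 * Real.pi), f θ := by
    rw [circleAngleMeasure, MeasureTheory.integral_smul_measure,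
      intervalIntegral.integral_of_le two_pi_pos.le]
    simp [ENNReal.toReal_inv, ENNReal.toReal_ofReal two_pi_pos.le, Real.pi_pos.le]
  have hi1 : IntervalIntegrable f volume 0 (2 * Real.pi - δ') := hf.intervalIntegrable _ _
  have hi2 : IntervalIntegrable f volume (2 * Real.pi - δ') (2 * Real.pi) :=
    hf.intervalIntegrable _ _
  have hsplit : ∫ θ in (0:ℝ)..(2 * Real.pi), f θ
      = (∫ θ in (0:ℝ)..(2 * Real.pi - δ'), f θ)
        + ∫ θ in (2 * Real.pi - δ')..(2 * Real.pi), f θ :=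
    (intervalIntegral.integral_add_adjacent_intervals hi1 hi2).symm
  have hI1 : ∫ θ in (0:ℝ)..(2 * Real.pi - δ'), f θ ≤ (2 * Real.pi - δ') * M := by
    have h := intervalIntegral.integral_mono_on (by linarith [Real.pi_pos]) hi1
      (intervalIntegrable_const (c := M)) (fun x _ => hb x)
    simpa [smul_eq_mul] using h
  have hI2 : ∫ θ in (2 * Real.pi - δ')..(2 * Real.pi), f θ ≤ δ' * (M - ε / 2) := by
    have hpt : ∀ x ∈ Set.Icc (2 * Real.pi - δ') (2 * Real.pi), f x ≤ M - ε / 2 := by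
      intro x hx
      refine le_of_lt (hδ ?_)
      rw [Metric.mem_ball, Real.dist_eq, abs_of_nonpos (by linarith [hx.2])]
      have h1 := hx.1
      have h2 : δ' ≤ δ / 2 := min_le_left _ _
      linarith
    have h := intervalIntegral.integral_mono_on (by linarith) hi2
      (intervalIntegrable_const (c := M - ε / 2)) hpt
    rw [intervalIntegral.integral_const, smul_eq_mul] at h
    have he : 2 * Real.pi - (2 * Real.pi - δ') = δ' := by ring
    rw [he] at h
    exact h
  have h2πM : 2 * Real.pi * M ≤ ∫ θ in (0:ℝ)..(2 * Real.pi), f θ := by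
    rw [hν] at havg
    rw [inv_mul_eq_div] at havg
    nlinarith [(le_div_iff₀ two_pi_pos).mp havg]
  nlinarith [mul_pos hδ'0 hε0]

end HelperLemmas2

noncomputable section HelperLemmas3

lemma hartogs_closure_superset :
    {p : Fin 2 → ℂ | ‖p 0‖ ≤ ‖p 1‖ ∧ ‖p 1‖ ≤ 1} ⊆
      closure {p : Fin 2 → ℂ |
        ‖p 0‖ < ‖p 1‖ ∧ ‖p 1‖ < 1} := by
  rintro p ⟨h01, h11⟩
  rw [Metric.mem_closure_iff]
  intro ε hε
  by_cases hw : p 1 = 0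
  · have hz0 : p 0 = 0 := by
      have h := h01
      rw [hw] at h
      simpa using le_antisymm (by simpa using h) (norm_nonneg (p 0))
    set a : ℝ := min (ε / 2) (1 / 2) with ha
    have ha0 : 0 < a := lt_min (by linarith) (by norm_num)
    refine ⟨![0, (a : ℂ)], ⟨?_, ?_⟩, ?_⟩
    · simpa using (by rwa [Complex.norm_real, Real.norm_eq_abs, abs_of_pos ha0] : (0:ℝ) < ‖(a : ℂ)‖)
    · show ‖(a : ℂ)‖ < 1
      rw [Complex.norm_real, Real.norm_eq_abs, abs_of_pos ha0]
      calc a ≤ 1 / 2 := min_le_right _ _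
      _ < 1 := by norm_num
    · rw [dist_pi_lt_iff hε]
      intro i
      fin_cases i
      · simpa [hz0, hw] using hε
      · show dist (p 1) ((a : ℂ)) < ε
        rw [hw, dist_comm, Complex.dist_eq, sub_zero, Complex.norm_real, Real.norm_eq_abs, abs_of_pos ha0]
        calc a ≤ ε / 2 := min_le_left _ _
        _ < ε := by linarith
  · have hp1 : 0 < ‖p 1‖ := norm_pos_iff.mpr hw
    have hp0le : ‖p 0‖ ≤ 1 := h01.trans h11
    set d : ℝ := min (ε / 3) (1 / 2) with hd
    have hd0 : 0 < d := lt_min (by linarith) (by norm_num)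
    have hd1 : d ≤ ε / 3 := min_le_left _ _
    have hd2 : d ≤ 1 / 2 := min_le_right _ _
    set t : ℝ := 1 - d with ht
    have ht0 : 0 < t := by simp only [ht]; linarith
    have ht1 : t < 1 := by simp only [ht]; linarith
    refine ⟨![((t : ℂ))^2 * p 0, (t : ℂ) * p 1], ⟨?_, ?_⟩, ?_⟩
    · show ‖((t:ℂ))^2 * p 0‖ < ‖(t:ℂ) * p 1‖
      rw [norm_mul, norm_mul, norm_pow, Complex.norm_real, Real.norm_eq_abs, abs_of_pos ht0]
      have k1 : t^2 * ‖p 0‖ ≤ t^2 * ‖p 1‖ :=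
        mul_le_mul_of_nonneg_left h01 (by positivity)
      have k2 : t^2 * ‖p 1‖ < t * ‖p 1‖ := by
        apply mul_lt_mul_of_pos_right _ hp1
        nlinarith
      linarith
    · show ‖(t:ℂ) * p 1‖ < 1
      rw [norm_mul, Complex.norm_real, Real.norm_eq_abs, abs_of_pos ht0]
      nlinarith
    · rw [dist_pi_lt_iff hε]
      intro i
      fin_cases i
      · show dist (p 0) (((t:ℂ))^2 * p 0) < ε
        rw [Complex.dist_eq]
        have he : p 0 - ((t:ℂ))^2 * p 0 = ((1 - t^2 : ℝ) : ℂ) * p 0 := by push_cast; ring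
        rw [he, norm_mul, Complex.norm_real, Real.norm_eq_abs, abs_of_nonneg (by nlinarith)]
        have hnn : (0:ℝ) ≤ 1 - t^2 := by nlinarith
        have k1 := mul_le_mul_of_nonneg_left hp0le hnn
        have k2 : 1 - t^2 ≤ 2 * d := by rw [ht]; nlinarith
        linarith
      · show dist (p 1) ((t:ℂ) * p 1) < ε
        rw [Complex.dist_eq]
        have he : p 1 - (t:ℂ) * p 1 = ((1 - t : ℝ) : ℂ) * p 1 := by push_cast; ring
        rw [he, norm_mul, Complex.norm_real, Real.norm_eq_abs, abs_of_nonneg (by linarith)]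
        nlinarith

end HelperLemmas3

/-- The Hartogs triangle is not P-hyperconvex. -/
theorem hartogs_not_phyperconvex :
    ¬ IsPHyperconvex {p : Fin 2 → ℂ |
        ‖p 0‖ < ‖p 1‖ ∧ ‖p 1‖ < 1} := by
  intro h
  set S : Set (Fin 2 → ℂ) :=
    {p : Fin 2 → ℂ | ‖p 0‖ < ‖p 1‖ ∧ ‖p 1‖ < 1} with hSdef
  obtain ⟨⟨hopen, hconn, hbdd⟩, φ, hpsh, hcont, ⟨z₁, hz₁, z₂, hz₂, hne⟩, hfront⟩ := h
  set X := closure S with hXdef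
  have hXc : IsClosed X := isClosed_closure
  have hsub : ∀ p : Fin 2 → ℂ, ‖p 0‖ ≤ ‖p 1‖ →
      ‖p 1‖ ≤ 1 → p ∈ X := fun p h1 h2 => hartogs_closure_superset ⟨h1, h2⟩
  have hfr : ∀ p ∈ X, p ∉ S → φ p = 0 := by
    intro p hp hps
    exact hfront p (by rw [hopen.frontier_eq]; exact ⟨hp, hps⟩)
  have hzero_mem : (0 : Fin 2 → ℂ) ∈ X := hsub 0 (by simp) (by simp)
  have hzero_not : (0 : Fin 2 → ℂ) ∉ S := by
    simp [hSdef, Set.mem_setOf_eq]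
  have hφ0 : φ 0 = 0 := hfr 0 hzero_mem hzero_not
  -- Step 1: φ ≤ 0 on X, by the maximum principle
  have hXcomp : IsCompact X := hbdd.isCompact_closure
  obtain ⟨p₀, hp₀X, hp₀max⟩ := hXcomp.exists_isMaxOn ⟨z₁, hz₁⟩ hcont
  have hmax : ∀ x ∈ X, φ x ≤ φ p₀ := fun x hx => hp₀max hx
  have hle : ∀ p ∈ X, φ p ≤ 0 := by
    by_cases hM : φ p₀ ≤ 0
    · exact fun p hp => (hmax p hp).trans hM
    push_neg at hM
    exfalso
    have hp₀S : p₀ ∈ S := by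
      by_contra hc
      exact absurd (hfr p₀ hp₀X hc) (by linarith)
    have hA : IsOpen {p | p ∈ S ∧ φ p = φ p₀} := by
      rw [Metric.isOpen_iff]
      rintro p ⟨hpS, hpM⟩
      obtain ⟨δ, hδ0, hδball⟩ := Metric.isOpen_iff.mp hopen p hpS
      refine ⟨δ, hδ0, ?_⟩
      intro q hq
      refine ⟨hδball hq, ?_⟩
      have hd : ∀ w : ℂ, ‖w‖ ≤ 1 → p + w • (q - p) ∈ X := by
        intro w hw
        refine subset_closure (hδball ?_)
        rw [Metric.mem_ball, dist_eq_norm, add_sub_cancel_left, norm_smul]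
        calc ‖w‖ * ‖q - p‖ ≤ 1 * ‖q - p‖ := by
              refine mul_le_mul_of_nonneg_right ?_ (norm_nonneg _)
              simpa using hw
        _ = ‖q - p‖ := one_mul _
        _ < δ := by rw [← dist_eq_norm]; exact hq
      have hs := pshCompact_submean hXc hpsh hcont p (q - p) 1 one_pos hd
      rw [hpM] at hs
      have hbnd : ∀ θ : ℝ, φ (cmap p (q - p) 1 θ) ≤ φ p₀ :=
        fun θ => hmax _ (cmap_mem one_pos hd θ)
      have hfc : Continuous fun θ => φ (cmap p (q - p) 1 θ) :=
        hcont.comp_continuous (cmap_continuous _ _ _) (fun θ => cmap_mem one_pos hd θ)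
      have ht := touch hfc hbnd hs
      have hcm : cmap p (q - p) 1 (2 * Real.pi) = q := by
        unfold cmap
        push_cast
        rw [Complex.exp_two_pi_mul_I]
        simp only [one_mul, one_smul]
        abel
      rw [hcm] at ht
      exact le_antisymm (hmax q (subset_closure (hδball hq))) ht
    have hB : IsOpen (S ∩ φ ⁻¹' {x | x ≠ φ p₀}) :=
      (hcont.mono subset_closure).isOpen_inter_preimage hopen isOpen_ne
    by_cases hBe : ∃ q ∈ S, φ q ≠ φ p₀
    · obtain ⟨q, hqS, hqM⟩ := hBe
      obtain ⟨x, hxS, hxu, hxv⟩ := hconn.isPreconnected _ _ hA hB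
        (fun y hy => by
          by_cases hc : φ y = φ p₀
          exacts [Or.inl ⟨hy, hc⟩, Or.inr ⟨hy, hc⟩])
        ⟨p₀, hp₀S, hp₀S, rfl⟩ ⟨q, hqS, hqS, hqM⟩
      exact hxv.2 hxu.2
    · push_neg at hBe
      have h0 : φ 0 = φ p₀ := by
        have hne' : (nhdsWithin 0 S).NeBot := mem_closure_iff_nhdsWithin_neBot.mp hzero_mem
        have h1 : Filter.Tendsto φ (nhdsWithin 0 S) (nhds (φ 0)) :=
          (hcont 0 hzero_mem).mono subset_closure
        have h2 : Filter.Tendsto φ (nhdsWithin 0 S) (nhds (φ p₀)) := by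
          refine Filter.Tendsto.congr' ?_ tendsto_const_nhds
          exact Filter.eventually_of_mem self_mem_nhdsWithin (fun y hy => (hBe y hy).symm)
        exact tendsto_nhds_unique h1 h2
      rw [hφ0] at h0
      linarith
  -- Step 2: φ vanishes on the disc {0} × D
  have hcirc0 : ∀ w : ℂ, ‖w‖ < 1 → φ ![0, w] = 0 := by
    intro w hw
    have hd : ∀ s : ℂ, ‖s‖ ≤ 1 → (0 : Fin 2 → ℂ) + s • ![0, w] ∈ X := by
      intro s hs
      have e0 : ((0 : Fin 2 → ℂ) + s • ![0, w]) 0 = 0 := by simp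
      have e1 : ((0 : Fin 2 → ℂ) + s • ![0, w]) 1 = s * w := by simp
      refine hsub _ ?_ ?_
      · rw [e0, e1]
        simpa using norm_nonneg (s * w)
      · rw [e1, norm_mul]
        nlinarith [norm_nonneg s, norm_nonneg w]
    have hs' := pshCompact_submean hXc hpsh hcont 0 ![0, w] 1 one_pos hd
    rw [hφ0] at hs'
    have hbnd : ∀ θ : ℝ, φ (cmap 0 ![0, w] 1 θ) ≤ 0 :=
      fun θ => hle _ (cmap_mem one_pos hd θ)
    have hfc : Continuous fun θ => φ (cmap 0 ![0, w] 1 θ) :=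
      hcont.comp_continuous (cmap_continuous _ _ _) (fun θ => cmap_mem one_pos hd θ)
    have ht := touch hfc hbnd hs'
    have hcm : cmap 0 ![0, w] 1 (2 * Real.pi) = ![0, w] := by
      unfold cmap
      push_cast
      rw [Complex.exp_two_pi_mul_I]
      simp
    rw [hcm] at ht
    have hmem : ![0, w] ∈ X := by
      refine hsub _ ?_ ?_
      · simpa using norm_nonneg w
      · simpa using hw.le
    exact le_antisymm (hle _ hmem) ht
  -- Step 3: φ vanishes everywhere on X
  have hall : ∀ p ∈ X, φ p = 0 := by
    intro p hp
    by_cases hpS : p ∈ S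
    · have h1 : ‖p 0‖ < ‖p 1‖ := hpS.1
      have h2 : ‖p 1‖ < 1 := hpS.2
      have hq0 : φ ![0, p 1] = 0 := hcirc0 (p 1) h2
      have hd : ∀ s : ℂ, ‖s‖ ≤ 1 → ![0, p 1] + s • ![p 0, 0] ∈ X := by
        intro s hs
        have e0 : (![0, p 1] + s • ![p 0, 0]) 0 = s * p 0 := by simp
        have e1 : (![0, p 1] + s • ![p 0, 0]) 1 = p 1 := by simp
        refine hsub _ ?_ ?_
        · rw [e0, e1, norm_mul]
          nlinarith [norm_nonneg (p 0), norm_nonneg s]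
        · rw [e1]; exact h2.le
      have hs' := pshCompact_submean hXc hpsh hcont ![0, p 1] ![p 0, 0] 1 one_pos hd
      rw [hq0] at hs'
      have hbnd : ∀ θ : ℝ, φ (cmap ![0, p 1] ![p 0, 0] 1 θ) ≤ 0 :=
        fun θ => hle _ (cmap_mem one_pos hd θ)
      have hfc : Continuous fun θ => φ (cmap ![0, p 1] ![p 0, 0] 1 θ) :=
        hcont.comp_continuous (cmap_continuous _ _ _) (fun θ => cmap_mem one_pos hd θ)
      have ht := touch hfc hbnd hs'
      have hcm : cmap ![0, p 1] ![p 0, 0] 1 (2 * Real.pi) = p := by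
        unfold cmap
        push_cast
        rw [Complex.exp_two_pi_mul_I]
        funext i
        fin_cases i <;> simp
      rw [hcm] at ht
      exact le_antisymm (hle p hp) ht
    · exact hfr p hp hpS
  exact hne (by rw [hall z₁ hz₁, hall z₂ hz₂])
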